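/- There exists a unique vector δ* ∈ ℝ^{J−1} such that ms*_j(δ*) = ms_j for every j = 1,…,J−1; equivalently, the map T has a unique fixed point δ* ∈ ℝ^{J−1}, and at this fixed point the model-predicted market share of every one of the J options (including the outside option J) coincides with the observed share ms_j. -/

import Mathlib

open Finset Real

namespace BLPaux

variable {n K : ℕ}

noncomputable def Ee (P : Fin K → Fin (n+1) → ℝ) (u : Fin (n+1) → Fin K → ℝ)
    (δ : Fin n → ℝ) (k : Fin K) (l : Fin (n+1)) : ℝ :=
  P k l * Real.exp ((Fin.snoc δ 0 : Fin (n+1) → ℝ) l + u l k)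

noncomputable def Se (P : Fin K → Fin (n+1) → ℝ) (u : Fin (n+1) → Fin K → ℝ)
    (δ : Fin n → ℝ) (k : Fin K) : ℝ :=
  ∑ l, Ee P u δ k l

noncomputable def G (d : Fin K → ℝ) (P : Fin K → Fin (n+1) → ℝ)
    (u : Fin (n+1) → Fin K → ℝ) (δ : Fin n → ℝ) (j : Fin (n+1)) : ℝ :=
  ∑ k, d k * (Ee P u δ k j / Se P u δ k)

noncomputable def Ff (d : Fin K → ℝ) (P : Fin K → Fin (n+1) → ℝ)
    (u : Fin (n+1) → Fin K → ℝ) (ms : Fin (n+1) → ℝ) (δ : Fin n → ℝ) : ℝ :=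
  ∑ k, d k * Real.log (Se P u δ k) - ∑ j : Fin n, ms j.castSucc * δ j

variable {d : Fin K → ℝ} {P : Fin K → Fin (n+1) → ℝ} {u : Fin (n+1) → Fin K → ℝ}
  {ms : Fin (n+1) → ℝ}

lemma Ee_pos (hP0 : ∀ k j, 0 < P k j) (δ : Fin n → ℝ) (k : Fin K) (l : Fin (n+1)) :
    0 < Ee P u δ k l := mul_pos (hP0 k l) (Real.exp_pos _)

lemma Se_pos (hP0 : ∀ k j, 0 < P k j) (δ : Fin n → ℝ) (k : Fin K) :
    0 < Se P u δ k :=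
  Finset.sum_pos (fun l _ => Ee_pos hP0 δ k l) univ_nonempty

lemma exists_dpos (hd0 : ∀ k, 0 ≤ d k) (hd1 : ∑ k, d k = 1) : ∃ k, 0 < d k := by
  by_contra h
  push_neg at h
  have : ∑ k, d k = 0 := le_antisymm (Finset.sum_nonpos fun k _ => h k)
    (Finset.sum_nonneg fun k _ => hd0 k)
  rw [hd1] at this; norm_num at this

lemma G_pos (hP0 : ∀ k j, 0 < P k j) (hd0 : ∀ k, 0 ≤ d k) (hd1 : ∑ k, d k = 1)
    (δ : Fin n → ℝ) (j : Fin (n+1)) : 0 < G d P u δ j := by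
  obtain ⟨k₀, hk₀⟩ := exists_dpos hd0 hd1
  refine Finset.sum_pos' (fun k _ => mul_nonneg (hd0 k)
    (div_nonneg (Ee_pos hP0 δ k j).le (Se_pos hP0 δ k).le)) ⟨k₀, mem_univ _, ?_⟩
  exact mul_pos hk₀ (div_pos (Ee_pos hP0 δ k₀ j) (Se_pos hP0 δ k₀))

lemma G_sum (hP0 : ∀ k j, 0 < P k j) (hd1 : ∑ k, d k = 1) (δ : Fin n → ℝ) :
    ∑ j, G d P u δ j = 1 := by
  simp only [G]
  rw [Finset.sum_comm, ← hd1]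
  refine Finset.sum_congr rfl fun k _ => ?_
  rw [← Finset.mul_sum, ← Finset.sum_div, ← Se]
  rw [div_self (Se_pos hP0 δ k).ne', mul_one]


lemma G_lt (hP0 : ∀ k j, 0 < P k j) (hd0 : ∀ k, 0 ≤ d k) (hd1 : ∑ k, d k = 1)
    {δ δ' : Fin n → ℝ} {j₀ : Fin n} (hj₀ : δ' j₀ < δ j₀)
    (hmax : ∃ l₀ : Fin (n+1),
      (Fin.snoc δ' 0 : Fin (n+1) → ℝ) l₀ < (Fin.snoc δ 0 : Fin (n+1) → ℝ) l₀ ∧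
      ∀ l, (Fin.snoc δ 0 : Fin (n+1) → ℝ) l - (Fin.snoc δ' 0 : Fin (n+1) → ℝ) l ≤
        (Fin.snoc δ 0 : Fin (n+1) → ℝ) l₀ - (Fin.snoc δ' 0 : Fin (n+1) → ℝ) l₀) :
    ∃ j : Fin n, G d P u δ' j.castSucc < G d P u δ j.castSucc := by
  obtain ⟨l₀, hl₀pos, hl₀max⟩ := hmax
  set e : Fin (n+1) → ℝ := fun l =>
    (Fin.snoc δ 0 : Fin (n+1) → ℝ) l - (Fin.snoc δ' 0 : Fin (n+1) → ℝ) l with he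
  set m := e l₀ with hm
  have hmpos : 0 < m := sub_pos.2 hl₀pos
  -- Ee relation
  have hEe : ∀ k l, Ee P u δ k l = Ee P u δ' k l * Real.exp (e l) := by
    intro k l
    simp only [Ee, he, mul_assoc, ← Real.exp_add]
    ring_nf
  have hSe : ∀ k, Se P u δ k < Real.exp m * Se P u δ' k := by
    intro k
    rw [Se, Se, Finset.mul_sum]
    refine Finset.sum_lt_sum (fun l _ => ?_) ⟨Fin.last n, mem_univ _, ?_⟩
    · rw [hEe k l, mul_comm (Real.exp m)]
      exact mul_le_mul_of_nonneg_left (Real.exp_le_exp.2 (hl₀max l)) (Ee_pos hP0 δ' k l).le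
    · have : e (Fin.last n) = 0 := by simp [he]
      rw [hEe k (Fin.last n), this, Real.exp_zero, mul_one]
      nth_rewrite 1 [← one_mul (Ee P u δ' k (Fin.last n))]
      exact mul_lt_mul_of_pos_right (by rw [← Real.exp_zero]; exact Real.exp_lt_exp.2 hmpos)
        (Ee_pos hP0 δ' k (Fin.last n))
  -- l₀ ≠ last
  have hl₀ne : l₀ ≠ Fin.last n := by
    intro hcontra
    have h1 : e l₀ = 0 := by simp [he, hcontra]
    have h2 : e j₀.castSucc ≤ e l₀ := hl₀max _
    rw [hm, h1] at hmpos; exact lt_irrefl _ hmpos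
  obtain ⟨j₁, hj₁⟩ : ∃ j₁ : Fin n, l₀ = j₁.castSucc := by
    rcases Fin.eq_castSucc_or_eq_last l₀ with h | h
    · exact h
    · exact absurd h hl₀ne
  refine ⟨j₁, ?_⟩
  rw [← hj₁]
  obtain ⟨k₀, hk₀⟩ := exists_dpos hd0 hd1
  refine Finset.sum_lt_sum (fun k _ => ?_) ⟨k₀, mem_univ _, ?_⟩
  · refine mul_le_mul_of_nonneg_left ?_ (hd0 k)
    rw [hEe k l₀, ← hm, div_le_div_iff₀ (Se_pos hP0 δ' k) (Se_pos hP0 δ k)]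
    calc Ee P u δ' k l₀ * Se P u δ k
        ≤ Ee P u δ' k l₀ * (Real.exp m * Se P u δ' k) :=
          mul_le_mul_of_nonneg_left (hSe k).le (Ee_pos hP0 δ' k l₀).le
      _ = Ee P u δ' k l₀ * Real.exp m * Se P u δ' k := by ring
  · refine mul_lt_mul_of_pos_left ?_ hk₀
    rw [hEe k₀ l₀, ← hm, div_lt_div_iff₀ (Se_pos hP0 δ' k₀) (Se_pos hP0 δ k₀)]
    calc Ee P u δ' k₀ l₀ * Se P u δ k₀
        < Ee P u δ' k₀ l₀ * (Real.exp m * Se P u δ' k₀) :=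
          mul_lt_mul_of_pos_left (hSe k₀) (Ee_pos hP0 δ' k₀ l₀)
      _ = Ee P u δ' k₀ l₀ * Real.exp m * Se P u δ' k₀ := by ring
  
lemma G_inj (hP0 : ∀ k j, 0 < P k j) (hd0 : ∀ k, 0 ≤ d k) (hd1 : ∑ k, d k = 1)
    {δ δ' : Fin n → ℝ}
    (h : ∀ j : Fin n, G d P u δ j.castSucc = G d P u δ' j.castSucc) : δ = δ' := by
  by_contra hne
  -- there is a coordinate where they differ; wlog obtain strict inequality case split
  have key : ∀ (a b : Fin n → ℝ), (∀ j : Fin n, G d P u a j.castSucc = G d P u b j.castSucc) →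
      (∃ j₀, b j₀ < a j₀) → False := by
    intro a b hab ⟨j₀, hj₀⟩
    have hmax : ∃ l₀ : Fin (n+1),
        (Fin.snoc b 0 : Fin (n+1) → ℝ) l₀ < (Fin.snoc a 0 : Fin (n+1) → ℝ) l₀ ∧
        ∀ l, (Fin.snoc a 0 : Fin (n+1) → ℝ) l - (Fin.snoc b 0 : Fin (n+1) → ℝ) l ≤
          (Fin.snoc a 0 : Fin (n+1) → ℝ) l₀ - (Fin.snoc b 0 : Fin (n+1) → ℝ) l₀ := by
      obtain ⟨l₀, _, hl₀⟩ := Finset.exists_max_image Finset.univ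
        (fun l => (Fin.snoc a 0 : Fin (n+1) → ℝ) l - (Fin.snoc b 0 : Fin (n+1) → ℝ) l)
        univ_nonempty
      refine ⟨l₀, ?_, fun l => hl₀ l (mem_univ l)⟩
      have := hl₀ j₀.castSucc (mem_univ _)
      simp only [Fin.snoc_castSucc] at this
      linarith [sub_pos.2 hj₀]
    obtain ⟨j, hj⟩ := G_lt hP0 hd0 hd1 hj₀ hmax
    rw [hab j] at hj; exact lt_irrefl _ hj
  rcases Function.ne_iff.1 hne with ⟨j₀, hj₀⟩
  rcases lt_or_gt_of_ne hj₀ with h1 | h1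
  · exact key δ' δ (fun j => (h j).symm) ⟨j₀, h1⟩
  · exact key δ δ' h ⟨j₀, h1⟩

lemma hasDerivAt_Se (δ : Fin n → ℝ) (j : Fin n) (k : Fin K) (t₀ : ℝ) :
    HasDerivAt (fun t => Se P u (Function.update δ j t) k)
      (Ee P u (Function.update δ j t₀) k j.castSucc) t₀ := by
  have key : ∀ l : Fin (n+1), HasDerivAt
      (fun t => Ee P u (Function.update δ j t) k l)
      (if l = j.castSucc then Ee P u (Function.update δ j t₀) k l else 0) t₀ := by
    intro l
    simp only [Ee, Fin.snoc_update]
    by_cases h : l = j.castSucc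
    · subst h
      simp only [Function.update_self, if_pos rfl]
      have h1 : HasDerivAt (fun t : ℝ => t + u j.castSucc k) 1 t₀ :=
        (hasDerivAt_id t₀).add_const _
      simpa using (h1.exp.const_mul (P k j.castSucc))
    · simp only [Function.update_of_ne h, if_neg h]
      exact hasDerivAt_const _ _
  have h2 := HasDerivAt.fun_sum (fun l (_ : l ∈ univ) => key l)
  simpa [Se, Finset.sum_ite_eq'] using h2

lemma hasDerivAt_Ff (hP0 : ∀ k j, 0 < P k j) (δ : Fin n → ℝ) (j : Fin n) :
    HasDerivAt (fun t => Ff d P u ms (Function.update δ j t))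
      (G d P u δ j.castSucc - ms j.castSucc) (δ j) := by
  have h1 : ∀ k ∈ (univ : Finset (Fin K)), HasDerivAt
      (fun t => d k * Real.log (Se P u (Function.update δ j t) k))
      (d k * (Ee P u δ k j.castSucc / Se P u δ k)) (δ j) := by
    intro k _
    have h := (hasDerivAt_Se (P := P) (u := u) δ j k (δ j)).log
      (Se_pos hP0 (Function.update δ j (δ j)) k).ne'
    rw [Function.update_eq_self] at h
    exact h.const_mul _
  have hsum := HasDerivAt.fun_sum h1
  have h2 : ∀ j' ∈ (univ : Finset (Fin n)), HasDerivAt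
      (fun t => ms j'.castSucc * Function.update δ j t j')
      (if j' = j then ms j.castSucc else 0) (δ j) := by
    intro j' _
    by_cases h : j' = j
    · subst h
      simp only [Function.update_self, if_pos rfl]
      simpa using (hasDerivAt_id (δ j')).const_mul (ms j'.castSucc)
    · simp only [Function.update_of_ne h, if_neg h]
      exact hasDerivAt_const _ _
  have hlin := HasDerivAt.fun_sum h2
  simp only [Finset.sum_ite_eq', mem_univ, if_pos] at hlin
  have := hsum.fun_sub hlin
  simpa [Ff, G] using this

lemma continuous_Ff (hP0 : ∀ k j, 0 < P k j) : Continuous (Ff d P u ms) := by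
  have hsnoc : ∀ l : Fin (n+1),
      Continuous fun δ : Fin n → ℝ => (Fin.snoc δ 0 : Fin (n+1) → ℝ) l := by
    intro l
    induction l using Fin.lastCases with
    | last => simp only [Fin.snoc_last]; exact continuous_const
    | cast i => simp only [Fin.snoc_castSucc]; exact continuous_apply i
  have hSe : ∀ k, Continuous fun δ : Fin n → ℝ => Se P u δ k := by
    intro k
    refine continuous_finset_sum _ fun l _ => ?_
    exact continuous_const.mul (((hsnoc l).add continuous_const).rexp)
  refine Continuous.sub ?_ ?_
  · refine continuous_finset_sum _ fun k _ => ?_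
    exact continuous_const.mul ((hSe k).log fun δ => (Se_pos hP0 δ k).ne')
  · exact continuous_finset_sum _ fun j _ => continuous_const.mul (continuous_apply j)

lemma Ff_lb (hn : 1 ≤ n) (hK : 1 ≤ K) (hP0 : ∀ k j, 0 < P k j) (hd0 : ∀ k, 0 ≤ d k)
    (hd1 : ∑ k, d k = 1) (hu : ∀ k, u (Fin.last n) k = 0)
    (hms0 : ∀ j, 0 < ms j) (hms1 : ∑ j, ms j = 1) :
    ∃ c ε : ℝ, 0 < ε ∧ ∀ (δ : Fin n → ℝ) (i : Fin n),
      c + ε * |δ i| ≤ Ff d P u ms δ := by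
  haveI : Nonempty (Fin K) := ⟨⟨0, hK⟩⟩
  have hne : (univ : Finset (Fin n)).Nonempty := ⟨⟨0, hn⟩, mem_univ _⟩
  set c : ℝ := (univ : Finset (Fin K × Fin (n+1))).inf' (by
      exact univ_nonempty) (fun kl => Real.log (P kl.1 kl.2) + u kl.2 kl.1) with hc
  set ε : ℝ := (univ : Finset (Fin (n+1))).inf' univ_nonempty ms with hε
  have hεpos : 0 < ε := by
    rw [hε, Finset.lt_inf'_iff]
    exact fun j _ => hms0 j
  have hεle : ∀ j, ε ≤ ms j := fun j => Finset.inf'_le _ (mem_univ j)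
  refine ⟨c, ε, hεpos, fun δ i => ?_⟩
  set M : ℝ := (univ.sup' hne δ) ⊔ 0 with hMdef
  have hM0 : 0 ≤ M := le_max_right _ _
  have hMj : ∀ j, δ j ≤ M := fun j =>
    le_trans (Finset.le_sup' δ (mem_univ j)) (le_max_left _ _)
  -- Step A : c + snoc δ 0 l ≤ log (Se δ k)
  have stepA : ∀ k l, c + (Fin.snoc δ 0 : Fin (n+1) → ℝ) l ≤ Real.log (Se P u δ k) := by
    intro k l
    have h1 : Ee P u δ k l ≤ Se P u δ k :=
      Finset.single_le_sum (fun l' _ => (Ee_pos hP0 δ k l').le) (mem_univ l)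
    have h2 : Real.log (Ee P u δ k l) ≤ Real.log (Se P u δ k) :=
      Real.log_le_log (Ee_pos hP0 δ k l) h1
    have h3 : Real.log (Ee P u δ k l) =
        Real.log (P k l) + ((Fin.snoc δ 0 : Fin (n+1) → ℝ) l + u l k) := by
      rw [Ee, Real.log_mul (hP0 k l).ne' (Real.exp_pos _).ne', Real.log_exp]
    have h4 : c ≤ Real.log (P k l) + u l k :=
      Finset.inf'_le _ (mem_univ (k, l))
    linarith
  -- Step A' : c + M ≤ log (Se δ k)
  have stepA' : ∀ k, c + M ≤ Real.log (Se P u δ k) := by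
    intro k
    obtain ⟨j₁, _, hj₁⟩ := Finset.exists_mem_eq_sup' hne δ
    have h1 := stepA k j₁.castSucc
    have h2 := stepA k (Fin.last n)
    simp only [Fin.snoc_castSucc] at h1
    simp only [Fin.snoc_last] at h2
    rcases max_cases (univ.sup' hne δ) (0:ℝ) with ⟨hm, _⟩ | ⟨hm, _⟩ <;>
      rw [hMdef, hm]
    · rw [hj₁]; exact h1
    · simpa using h2
  -- Step B : c + M ≤ ∑ k, d k * log (Se δ k)
  have stepB : c + M ≤ ∑ k, d k * Real.log (Se P u δ k) := by
    calc c + M = ∑ k, d k * (c + M) := by rw [← Finset.sum_mul, hd1, one_mul]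
      _ ≤ ∑ k, d k * Real.log (Se P u δ k) :=
        Finset.sum_le_sum fun k _ => mul_le_mul_of_nonneg_left (stepA' k) (hd0 k)
  -- Step C : the linear part
  have hsum_inside : ∑ j : Fin n, ms j.castSucc = 1 - ms (Fin.last n) := by
    have := Fin.sum_univ_castSucc ms
    rw [hms1] at this; linarith
  have stepC : ∑ j : Fin n, ms j.castSucc * δ j ≤
      ms i.castSucc * δ i + (1 - ms (Fin.last n) - ms i.castSucc) * M := by
    rw [← Finset.add_sum_erase _ _ (mem_univ i)]
    have h1 : ∑ j ∈ univ.erase i, ms j.castSucc * δ j ≤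
        ∑ j ∈ univ.erase i, ms j.castSucc * M :=
      Finset.sum_le_sum fun j _ =>
        mul_le_mul_of_nonneg_left (hMj j) (hms0 j.castSucc).le
    have h2 : ∑ j ∈ univ.erase i, ms j.castSucc * M =
        (1 - ms (Fin.last n) - ms i.castSucc) * M := by
      rw [← Finset.sum_mul]
      congr 1
      rw [← hsum_inside, ← Finset.add_sum_erase _ _ (mem_univ i)]
      ring
    linarith
  -- combine
  have hMi : δ i ≤ M := hMj i
  have hεlast := hεle (Fin.last n)
  have hεi := hεle i.castSucc
  have hlast := hms0 (Fin.last n)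
  have hmsi := hms0 i.castSucc
  rw [Ff]
  rcases abs_cases (δ i) with ⟨ha, hb⟩ | ⟨ha, hb⟩ <;> rw [ha]
  · nlinarith [mul_le_mul_of_nonneg_left hMi hlast.le,
      mul_le_mul_of_nonneg_right hεlast hb]
  · nlinarith [mul_nonneg (hms0 (Fin.last n)).le hM0, mul_nonneg hmsi.le hM0,
      mul_le_mul_of_nonneg_right hεi (neg_nonneg.2 hb.le)]

lemma exists_sol (hn : 1 ≤ n) (hK : 1 ≤ K) (hP0 : ∀ k j, 0 < P k j) (hd0 : ∀ k, 0 ≤ d k)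
    (hd1 : ∑ k, d k = 1) (hu : ∀ k, u (Fin.last n) k = 0)
    (hms0 : ∀ j, 0 < ms j) (hms1 : ∑ j, ms j = 1) :
    ∃ δ : Fin n → ℝ, ∀ j : Fin n, G d P u δ j.castSucc = ms j.castSucc := by
  obtain ⟨c, ε, hεpos, hlb⟩ := Ff_lb hn hK hP0 hd0 hd1 hu hms0 hms1
  set F0 := Ff d P u ms 0 with hF0
  set R : ℝ := max ((F0 - c) / ε + 1) 1 with hR
  have hRpos : 0 < R := lt_of_lt_of_le one_pos (le_max_right _ _)
  have hcR : F0 < c + ε * R := by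
    have h1 : (F0 - c) / ε + 1 ≤ R := le_max_left _ _
    have := mul_le_mul_of_nonneg_left h1 hεpos.le
    rw [mul_add, mul_div_cancel₀ _ hεpos.ne', mul_one] at this
    linarith
  obtain ⟨δs, hδsmem, hδsmin⟩ := (isCompact_closedBall (0 : Fin n → ℝ) R).exists_isMinOn
    ⟨0, Metric.mem_closedBall_self hRpos.le⟩ (continuous_Ff hP0).continuousOn
  have hglobal : ∀ δ, Ff d P u ms δs ≤ Ff d P u ms δ := by
    intro δ
    by_cases hδ : δ ∈ Metric.closedBall (0 : Fin n → ℝ) R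
    · exact hδsmin hδ
    · have h1 : ¬ ‖δ‖ ≤ R := by
        simpa [Metric.mem_closedBall, dist_zero_right] using hδ
      have h2 : ∃ i, R < |δ i| := by
        by_contra hcon
        push_neg at hcon
        exact h1 ((pi_norm_le_iff_of_nonneg hRpos.le).2 fun i => by
          simpa [Real.norm_eq_abs] using hcon i)
      obtain ⟨i, hi⟩ := h2
      have h3 := hlb δ i
      have h4 : c + ε * R ≤ c + ε * |δ i| := by nlinarith
      have h5 : Ff d P u ms δs ≤ F0 := hδsmin (Metric.mem_closedBall_self hRpos.le)
      linarith
  refine ⟨δs, fun j => ?_⟩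
  have hloc : IsLocalMin (fun t => Ff d P u ms (Function.update δs j t)) (δs j) := by
    apply Filter.Eventually.of_forall
    intro t
    simpa [Function.update_eq_self] using hglobal (Function.update δs j t)
  have hder := hasDerivAt_Ff (d := d) (u := u) (ms := ms) hP0 δs j
  have h0 := hloc.deriv_eq_zero
  rw [hder.deriv] at h0
  linarith

end BLPaux

/-- Lemma 2 of the paper (BLP-type inversion for the rational inattention discrete
choice model): there exists a unique `δ* ∈ ℝ^{J-1}` matching the predicted market
shares of the inside goods to the observed ones; equivalently the map `T` has a
unique fixed point, and at any fixed point the predicted market share of every one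
of the `J` options (including the outside option) coincides with the observed one. -/
theorem stmt_0
    (n K : ℕ) (hn : 1 ≤ n) (hK : 1 ≤ K)
    (d : Fin K → ℝ) (hd0 : ∀ k, 0 ≤ d k) (hd1 : ∑ k, d k = 1)
    (P : Fin K → Fin (n + 1) → ℝ)
    (hP0 : ∀ k j, 0 < P k j) (hP1 : ∀ k, ∑ j, P k j = 1)
    (u : Fin (n + 1) → Fin K → ℝ) (hu : ∀ k, u (Fin.last n) k = 0)
    (ms : Fin (n + 1) → ℝ) (hms0 : ∀ j, 0 < ms j) (hms1 : ∑ j, ms j = 1)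
    (Pcond : (Fin n → ℝ) → Fin K → Fin (n + 1) → ℝ)
    (hPcond : ∀ δ k j, Pcond δ k j =
      P k j * Real.exp ((Fin.snoc δ 0 : Fin (n + 1) → ℝ) j + u j k) /
        ∑ l, P k l * Real.exp ((Fin.snoc δ 0 : Fin (n + 1) → ℝ) l + u l k))
    (msStar : (Fin n → ℝ) → Fin (n + 1) → ℝ)
    (hmsStar : ∀ δ j, msStar δ j = ∑ k, d k * Pcond δ k j)
    (T : (Fin n → ℝ) → Fin n → ℝ)
    (hT : ∀ δ j, T δ j = δ j + Real.log (ms j.castSucc) - Real.log (msStar δ j.castSucc)) :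
    (∃! δstar : Fin n → ℝ, ∀ j : Fin n, msStar δstar j.castSucc = ms j.castSucc) ∧
    (∃! δstar : Fin n → ℝ, T δstar = δstar) ∧
    (∀ δstar : Fin n → ℝ, T δstar = δstar →
      ∀ j : Fin (n + 1), msStar δstar j = ms j) := by
  have hG : ∀ δ j, msStar δ j = BLPaux.G d P u δ j := by
    intro δ j
    simp only [hmsStar, hPcond, BLPaux.G, BLPaux.Ee, BLPaux.Se]
  -- Part 1
  obtain ⟨δs, hδs⟩ := BLPaux.exists_sol (d := d) (P := P) (u := u) (ms := ms)
    hn hK hP0 hd0 hd1 hu hms0 hms1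
  have part1 : ∃! δstar : Fin n → ℝ,
      ∀ j : Fin n, msStar δstar j.castSucc = ms j.castSucc := by
    refine ⟨δs, fun j => by rw [hG]; exact hδs j, fun y hy => ?_⟩
    refine BLPaux.G_inj (u := u) hP0 hd0 hd1 fun j => ?_
    rw [← hG, ← hG, hy j, hG]; exact (hδs j).symm
  -- fixed points of T are exactly the solutions
  have hfix : ∀ δ : Fin n → ℝ, T δ = δ ↔
      ∀ j : Fin n, msStar δ j.castSucc = ms j.castSucc := by
    intro δ
    constructor
    · intro h j
      have h1 := congrFun h j
      rw [hT] at h1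
      have h2 : Real.log (ms j.castSucc) = Real.log (msStar δ j.castSucc) := by linarith
      have h3 : 0 < msStar δ j.castSucc := by
        rw [hG]; exact BLPaux.G_pos hP0 hd0 hd1 δ j.castSucc
      rw [← Real.exp_log h3, ← Real.exp_log (hms0 j.castSucc), h2]
    · intro h
      funext j
      rw [hT, h j]
      ring
  have part2 : ∃! δstar : Fin n → ℝ, T δstar = δstar := by
    obtain ⟨δ₁, h₁, huniq⟩ := part1
    exact ⟨δ₁, (hfix δ₁).2 h₁, fun y hy => huniq y ((hfix y).1 hy)⟩
  refine ⟨part1, part2, fun δ hδ j => ?_⟩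
  have hin := (hfix δ).1 hδ
  induction j using Fin.lastCases with
  | cast i => exact hin i
  | last =>
    have hsum : ∑ j, msStar δ j = 1 := by
      calc ∑ j, msStar δ j = ∑ j, BLPaux.G d P u δ j :=
        Finset.sum_congr rfl fun j _ => hG δ j
      _ = 1 := BLPaux.G_sum hP0 hd1 δ
    have h1 := Fin.sum_univ_castSucc (fun j => msStar δ j)
    have h2 := Fin.sum_univ_castSucc ms
    rw [hsum] at h1
    rw [hms1] at h2
    have h3 : ∑ i : Fin n, msStar δ i.castSucc = ∑ i : Fin n, ms i.castSucc :=
      Finset.sum_congr rfl fun i _ => hin i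
    linarith

-- #print axioms stmt_0
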